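/- Let (Ω, P) be a probability space, let A₁, …, A_m be events, and let p ∈ [0,1]. Suppose that for every subset J ⊆ {1,…,m} and every i ∉ J such that P(⋂_{j∈J} A_j) > 0, the conditional probability P(A_i | ⋂_{j∈J} A_j) is at most p (and P(A_i) ≤ p for each i). Then for every k with 0 ≤ k ≤ m, the probability that at least k of the events A₁, …, A_m occur is at most (m choose k)·p^k. -/

import Mathlib

open MeasureTheory ProbabilityTheory
open scoped ENNReal

/-- Let `(Ω, P)` be a probability space, let `A₁, …, A_m` be events
(indexed by `Fin m`), and let `p ∈ [0,1]`. Suppose that `P(A_i) ≤ p` for each `i`, and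
for every subset `J ⊆ {1,…,m}` and every `i ∉ J` such that `P(⋂_{j∈J} A_j) > 0`, the
conditional probability `P(A_i | ⋂_{j∈J} A_j)` is at most `p`. Then for every `k` with
`0 ≤ k ≤ m`, the probability that at least `k` of the events `A₁, …, A_m` occur is at
most `(m choose k)·p^k`. -/
theorem stmt9 {Ω : Type*} [MeasurableSpace Ω] (P : Measure Ω) [IsProbabilityMeasure P]
    (m : ℕ) (A : Fin m → Set Ω) (hAmeas : ∀ i, MeasurableSet (A i))
    (p : ℝ) (hp0 : 0 ≤ p) (hp1 : p ≤ 1)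
    (hsingle : ∀ i, P (A i) ≤ ENNReal.ofReal p)
    (hcond : ∀ (J : Finset (Fin m)) (i : Fin m), i ∉ J →
      0 < P (⋂ j ∈ J, A j) →
      ProbabilityTheory.cond P (⋂ j ∈ J, A j) (A i) ≤ ENNReal.ofReal p) :
    ∀ k : ℕ, k ≤ m →
      P {ω | k ≤ Nat.card {i : Fin m // ω ∈ A i}}
        ≤ (m.choose k : ℝ≥0∞) * ENNReal.ofReal p ^ k := by
  classical
  -- Key lemma: P(⋂_{j∈J} A_j) ≤ p^|J|
  have hmeasJ : ∀ J : Finset (Fin m), MeasurableSet (⋂ j ∈ J, A j) := by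
    intro J
    exact MeasurableSet.biInter J.countable_toSet (fun j _ => hAmeas j)
  have key : ∀ J : Finset (Fin m), P (⋂ j ∈ J, A j) ≤ ENNReal.ofReal p ^ J.card := by
    intro J
    induction J using Finset.induction_on with
    | empty => simp
    | @insert i J hiJ ih =>
      rw [Finset.card_insert_of_notMem hiJ, Finset.set_biInter_insert]
      by_cases h0 : P (⋂ j ∈ J, A j) = 0
      · calc P (A i ∩ ⋂ j ∈ J, A j) ≤ P (⋂ j ∈ J, A j) :=
              measure_mono Set.inter_subset_right
          _ = 0 := h0
          _ ≤ _ := zero_le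
      · have hpos : 0 < P (⋂ j ∈ J, A j) := pos_iff_ne_zero.mpr h0
        have hc := hcond J i hiJ hpos
        have hca : ProbabilityTheory.cond P (⋂ j ∈ J, A j) (A i)
            = (P (⋂ j ∈ J, A j))⁻¹ * P ((⋂ j ∈ J, A j) ∩ A i) :=
          ProbabilityTheory.cond_apply (hmeasJ J) P (A i)
        have hne : P (⋂ j ∈ J, A j) ≠ ⊤ := measure_ne_top P _
        have heq : P ((⋂ j ∈ J, A j) ∩ A i)
            = P (⋂ j ∈ J, A j) * ProbabilityTheory.cond P (⋂ j ∈ J, A j) (A i) := by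
          rw [hca, ← mul_assoc, ENNReal.mul_inv_cancel h0 hne, one_mul]
        calc P (A i ∩ ⋂ j ∈ J, A j) = P ((⋂ j ∈ J, A j) ∩ A i) := by
              rw [Set.inter_comm]
          _ = P (⋂ j ∈ J, A j) * ProbabilityTheory.cond P (⋂ j ∈ J, A j) (A i) := heq
          _ ≤ ENNReal.ofReal p ^ J.card * ENNReal.ofReal p :=
              mul_le_mul' ih hc
          _ = ENNReal.ofReal p ^ (J.card + 1) := by rw [pow_succ]
  intro k hk
  -- inclusion into union over k-subsets
  have hsub : {ω | k ≤ Nat.card {i : Fin m // ω ∈ A i}}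
      ⊆ ⋃ J ∈ Finset.univ.powersetCard k, ⋂ j ∈ J, A j := by
    intro ω hω
    simp only [Set.mem_setOf_eq] at hω
    have hcard : Nat.card {i : Fin m // ω ∈ A i}
        = (Finset.univ.filter (fun i => ω ∈ A i)).card := by
      rw [Nat.card_eq_fintype_card]
      exact Fintype.card_subtype _
    rw [hcard] at hω
    obtain ⟨J, hJsub, hJcard⟩ := Finset.exists_subset_card_eq hω
    simp only [Set.mem_iUnion]
    exact ⟨J, Finset.mem_powersetCard.mpr ⟨Finset.subset_univ _, hJcard⟩,
      Set.mem_biInter fun j hj => (Finset.mem_filter.mp (hJsub hj)).2⟩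
  calc P {ω | k ≤ Nat.card {i : Fin m // ω ∈ A i}}
      ≤ P (⋃ J ∈ Finset.univ.powersetCard k, ⋂ j ∈ J, A j) := measure_mono hsub
    _ ≤ ∑ J ∈ Finset.univ.powersetCard k, P (⋂ j ∈ J, A j) :=
        measure_biUnion_finset_le _ _
    _ ≤ ∑ J ∈ Finset.univ.powersetCard k, ENNReal.ofReal p ^ k := by
        refine Finset.sum_le_sum fun J hJ => ?_
        have := key J
        rwa [(Finset.mem_powersetCard.mp hJ).2] at this
    _ = (m.choose k : ℝ≥0∞) * ENNReal.ofReal p ^ k := by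
        rw [Finset.sum_const, Finset.card_powersetCard, Finset.card_univ,
          Fintype.card_fin, nsmul_eq_mul]
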